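/- Let ρ₋, ρ₊ > 0 and u₋, u₊, β be real numbers, and set σ₀ = (√ρ₋·u₋ + √ρ₊·u₊)/(√ρ₋ + √ρ₊). Then the functions u_δ(t) = σ₀ + β·t, x(t) = σ₀·t + (1/2)β·t², w(t) = −√(ρ₋·ρ₊)·(u₊ − u₋)·t satisfy x(0) = 0, w(0) = 0, and for every t ≥ 0: (i) x′(t) = u_δ(t); (ii) w′(t) = u_δ(t)·(ρ₊ − ρ₋) − (ρ₊·(u₊ + β·t) − ρ₋·(u₋ + β·t)); (iii) (w·u_δ)′(t) = u_δ(t)·(ρ₊·(u₊ + β·t) − ρ₋·(u₋ + β·t)) − (ρ₊·(u₊ + β·t)² − ρ₋·(u₋ + β·t)²) + β·w(t). -/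

import Mathlib

/-- Generalized Rankine–Hugoniot conditions for the delta shock of the
pressureless Euler equations with Coulomb-like friction. -/
theorem stmt_0 (ρm ρp um up β : ℝ) (hρm : 0 < ρm) (hρp : 0 < ρp)
    (σ₀ : ℝ)
    (hσ₀ : σ₀ = (Real.sqrt ρm * um + Real.sqrt ρp * up) / (Real.sqrt ρm + Real.sqrt ρp))
    (uδ x w : ℝ → ℝ)
    (huδ : ∀ t, uδ t = σ₀ + β * t)
    (hx : ∀ t, x t = σ₀ * t + (1 / 2) * β * t ^ 2)
    (hw : ∀ t, w t = -Real.sqrt (ρm * ρp) * (up - um) * t) :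
    x 0 = 0 ∧ w 0 = 0 ∧
    ∀ t : ℝ, 0 ≤ t →
      HasDerivAt x (uδ t) t ∧
      HasDerivAt w (uδ t * (ρp - ρm) - (ρp * (up + β * t) - ρm * (um + β * t))) t ∧
      HasDerivAt (fun s => w s * uδ s)
        (uδ t * (ρp * (up + β * t) - ρm * (um + β * t))
          - (ρp * (up + β * t) ^ 2 - ρm * (um + β * t) ^ 2) + β * w t) t := by
  have hxe : x = fun t => σ₀ * t + (1 / 2) * β * t ^ 2 := funext hx
  have hwe : w = fun t => -Real.sqrt (ρm * ρp) * (up - um) * t := funext hw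
  have hue : uδ = fun t => σ₀ + β * t := funext huδ
  subst hxe hwe hue
  set a := Real.sqrt ρm with haa
  set b := Real.sqrt ρp with hbb
  have ha : 0 < a := Real.sqrt_pos.mpr hρm
  have hb : 0 < b := Real.sqrt_pos.mpr hρp
  have ha2 : a ^ 2 = ρm := Real.sq_sqrt hρm.le
  have hb2 : b ^ 2 = ρp := Real.sq_sqrt hρp.le
  have hab : Real.sqrt (ρm * ρp) = a * b := Real.sqrt_mul hρm.le ρp
  have hapb : a + b ≠ 0 := by positivity
  have hσ : σ₀ * (a + b) = a * um + b * up := by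
    rw [hσ₀]; field_simp
  refine ⟨by simp, by simp, fun t ht => ?_⟩
  have h1 : HasDerivAt (fun s : ℝ => σ₀ * s + (1 / 2) * β * s ^ 2) (σ₀ + β * t) t := by
    have := ((hasDerivAt_id t).const_mul σ₀).add
      (((hasDerivAt_pow 2 t)).const_mul ((1 : ℝ) / 2 * β))
    convert this using 1
    · rfl
    · rfl
    · rfl
    · norm_num
      ring
  have h2 : HasDerivAt (fun s : ℝ => -Real.sqrt (ρm * ρp) * (up - um) * s)
      (-Real.sqrt (ρm * ρp) * (up - um)) t := by
    simpa using (hasDerivAt_id t).const_mul (-Real.sqrt (ρm * ρp) * (up - um))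
  refine ⟨h1, ?_, ?_⟩
  · convert h2 using 1
    rw [hab, ← ha2, ← hb2]
    linear_combination (b - a) * hσ
  · have h4 : HasDerivAt (fun s : ℝ => σ₀ + β * s) β t := by
      simpa using ((hasDerivAt_id t).const_mul β).const_add σ₀
    have h3 := h2.mul h4
    convert h3 using 1
    · rfl
    · rfl
    · rfl
    rw [hab, ← ha2, ← hb2]
    linear_combination (-(a * um) + b * up - (a - b) * β * t) * hσ
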